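/- Let v₀ > 0, γ ≥ 0, and let s : [0,∞) → ℝ satisfy |s(t) − s(τ)| ≥ v₀(t−τ) for 0 ≤ τ ≤ t, and let v : [0,∞) → ℝ be continuous with |v(τ)| ≤ v₁ for all τ. Then for all t ≥ 0, |∫_0^t exp(−(s(t)−s(τ))²/(4(t−τ)))/(2√(π(t−τ))) · e^{−γ(t−τ)} v(τ) dτ| ≤ v₁/v₀. -/

import Mathlib

open Real MeasureTheory

open Set in
/-- Value of the improper heat-kernel integral along the front. -/
lemma heat_majorant_integral (v₀ v₁ : ℝ) (hv₀ : 0 < v₀) (hv₁ : 0 ≤ v₁) :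
    ∫ u in Ioi (0:ℝ), v₁ * (Real.exp (-(v₀ ^ 2 / 4 * u)) /
      (2 * Real.sqrt Real.pi * Real.sqrt u)) = v₁ / v₀ := by
  have hr : (0:ℝ) < v₀ ^ 2 / 4 := by positivity
  have hπ : (0:ℝ) < Real.sqrt Real.pi := Real.sqrt_pos.mpr Real.pi_pos
  have hcongr : ∀ u ∈ Ioi (0:ℝ),
      v₁ * (Real.exp (-(v₀ ^ 2 / 4 * u)) / (2 * Real.sqrt Real.pi * Real.sqrt u))
        = (v₁ / (2 * Real.sqrt Real.pi)) *
            (u ^ ((1:ℝ)/2 - 1) * Real.exp (-(v₀ ^ 2 / 4 * u))) := by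
    intro u hu
    have hu0 : (0:ℝ) < u := hu
    have hsu : (0:ℝ) < Real.sqrt u := Real.sqrt_pos.mpr hu0
    have : u ^ ((1:ℝ)/2 - 1) = (Real.sqrt u)⁻¹ := by
      rw [show ((1:ℝ)/2 - 1) = -(1/2) by norm_num, Real.rpow_neg hu0.le,
        Real.sqrt_eq_rpow]
    rw [this]
    field_simp
  rw [setIntegral_congr_fun measurableSet_Ioi hcongr, integral_const_mul,
    Real.integral_rpow_mul_exp_neg_mul_Ioi one_half_pos hr, Real.Gamma_one_half_eq]
  have h1 : ((1:ℝ) / (v₀ ^ 2 / 4)) = (2 / v₀) ^ 2 := by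
    field_simp
    norm_num
  have h2 : ((1:ℝ) / (v₀ ^ 2 / 4)) ^ ((1:ℝ)/2) = 2 / v₀ := by
    rw [show ((1:ℝ)/2) = 1/(2:ℝ) by norm_num, ← Real.sqrt_eq_rpow, h1,
      Real.sqrt_sq (by positivity)]
  rw [h2]
  field_simp


open Set in
lemma heat_majorant_integrable (v₀ v₁ : ℝ) (hv₀ : 0 < v₀) :
    IntegrableOn (fun u : ℝ => v₁ * (Real.exp (-(v₀ ^ 2 / 4 * u)) /
      (2 * Real.sqrt Real.pi * Real.sqrt u))) (Ioi (0:ℝ)) := by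
  have hr : (0:ℝ) < v₀ ^ 2 / 4 := by positivity
  have base := integrableOn_rpow_mul_exp_neg_mul_rpow (s := -(1/2 : ℝ)) (p := 1)
      (b := v₀ ^ 2 / 4) (by norm_num) one_pos hr
  have base2 : IntegrableOn (fun x : ℝ => v₁ / (2 * Real.sqrt Real.pi) *
      (x ^ (-(1/2):ℝ) * Real.exp (-(v₀ ^ 2 / 4) * x ^ (1:ℝ)))) (Ioi (0:ℝ)) :=
    base.const_mul _
  refine base2.congr_fun ?_ measurableSet_Ioi
  intro u hu
  have hu0 : (0:ℝ) < u := hu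
  have hsu : (0:ℝ) < Real.sqrt u := Real.sqrt_pos.mpr hu0
  have hπ : (0:ℝ) < Real.sqrt Real.pi := Real.sqrt_pos.mpr Real.pi_pos
  have h1 : u ^ (-(1/2) : ℝ) = (Real.sqrt u)⁻¹ := by
    rw [Real.rpow_neg hu0.le, Real.sqrt_eq_rpow]
  have h2 : -(v₀ ^ 2 / 4) * u ^ (1:ℝ) = -(v₀ ^ 2 / 4 * u) := by
    rw [Real.rpow_one]; ring
  simp only [h1, h2]
  field_simp

theorem on_front_potential_density_bound (v₀ v₁ γ : ℝ) (hv₀ : 0 < v₀) (hγ : 0 ≤ γ)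
    (s v : ℝ → ℝ)
    (hs : ∀ τ t : ℝ, 0 ≤ τ → τ ≤ t → |s t - s τ| ≥ v₀ * (t - τ))
    (hv_cont : Continuous v)
    (hv_bdd : ∀ τ : ℝ, |v τ| ≤ v₁) :
    ∀ t : ℝ, 0 ≤ t →
      |∫ τ in (0:ℝ)..t,
          Real.exp (-(s t - s τ) ^ 2 / (4 * (t - τ))) / (2 * Real.sqrt (Real.pi * (t - τ))) *
            (Real.exp (-γ * (t - τ)) * v τ)|
        ≤ v₁ / v₀ := by
  intro t ht
  have hv₁ : 0 ≤ v₁ := le_trans (abs_nonneg _) (hv_bdd 0)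
  set F : ℝ → ℝ := fun τ =>
    Real.exp (-(s t - s τ) ^ 2 / (4 * (t - τ))) / (2 * Real.sqrt (Real.pi * (t - τ))) *
      (Real.exp (-γ * (t - τ)) * v τ) with hF
  by_cases hfi : IntervalIntegrable F volume 0 t
  · set h : ℝ → ℝ := fun u => v₁ * (Real.exp (-(v₀ ^ 2 / 4 * u)) /
        (2 * Real.sqrt Real.pi * Real.sqrt u)) with hh
    have hint : IntegrableOn h (Set.Ioi 0) := heat_majorant_integrable v₀ v₁ hv₀
    have hintt : IntervalIntegrable h volume 0 t := by
      rw [intervalIntegrable_iff]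
      exact hint.mono_set (by rw [Set.uIoc_of_le ht]; exact Set.Ioc_subset_Ioi_self)
    have hgt : IntervalIntegrable (fun τ => h (t - τ)) volume 0 t := by
      simpa using (hintt.comp_sub_left t).symm
    have hbound : ∀ τ ∈ Set.Icc (0:ℝ) t, |F τ| ≤ h (t - τ) := by
      intro τ hτ
      rcases eq_or_lt_of_le hτ.2 with hτt | hτt
      · rw [hτt]
        simp [hF, hh, sub_self]
      · have hu : 0 < t - τ := sub_pos.mpr hτt
        have hd : v₀ * (t - τ) ≤ |s t - s τ| := hs τ t hτ.1 hτ.2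
        have hsq : v₀ ^ 2 * (t - τ) ^ 2 ≤ (s t - s τ) ^ 2 := by
          have h0 : 0 ≤ v₀ * (t - τ) := by positivity
          calc v₀ ^ 2 * (t - τ) ^ 2 = (v₀ * (t - τ)) * (v₀ * (t - τ)) := by ring
          _ ≤ |s t - s τ| * |s t - s τ| := mul_self_le_mul_self h0 hd
          _ = (s t - s τ) ^ 2 := by rw [abs_mul_abs_self]; ring
        have hexp1 : Real.exp (-(s t - s τ) ^ 2 / (4 * (t - τ)))
            ≤ Real.exp (-(v₀ ^ 2 / 4 * (t - τ))) := by
          apply Real.exp_le_exp.mpr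
          rw [div_le_iff₀ (by positivity : (0:ℝ) < 4 * (t - τ))]
          nlinarith [hsq]
        have hexp2 : Real.exp (-γ * (t - τ)) ≤ 1 := by
          apply Real.exp_le_one_iff.mpr
          nlinarith
        have hFτ : |F τ| = Real.exp (-(s t - s τ) ^ 2 / (4 * (t - τ))) /
            (2 * Real.sqrt (Real.pi * (t - τ))) * (Real.exp (-γ * (t - τ)) * |v τ|) := by
          simp only [hF]
          rw [abs_mul, abs_mul, abs_div, abs_of_nonneg (Real.exp_pos _).le,
            abs_of_nonneg (Real.exp_pos _).le,
            abs_of_nonneg (by positivity : (0:ℝ) ≤ 2 * Real.sqrt (Real.pi * (t - τ)))]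
        rw [hFτ]
        calc Real.exp (-(s t - s τ) ^ 2 / (4 * (t - τ))) /
              (2 * Real.sqrt (Real.pi * (t - τ))) * (Real.exp (-γ * (t - τ)) * |v τ|)
            ≤ Real.exp (-(v₀ ^ 2 / 4 * (t - τ))) /
              (2 * Real.sqrt (Real.pi * (t - τ))) * (1 * v₁) := by
              gcongr
              exact hv_bdd τ
        _ = h (t - τ) := by
              simp only [hh]
              rw [Real.sqrt_mul Real.pi_pos.le]
              ring
    calc |∫ τ in (0:ℝ)..t, F τ| ≤ ∫ τ in (0:ℝ)..t, |F τ| := by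
          simpa [Real.norm_eq_abs] using
            intervalIntegral.norm_integral_le_integral_norm (f := F) (μ := volume) ht
    _ ≤ ∫ τ in (0:ℝ)..t, h (t - τ) :=
          intervalIntegral.integral_mono_on ht hfi.abs hgt hbound
    _ = ∫ u in (0:ℝ)..t, h u := by
          rw [intervalIntegral.integral_comp_sub_left h t, sub_self, sub_zero]
    _ ≤ ∫ u in Set.Ioi (0:ℝ), h u := by
          rw [intervalIntegral.integral_of_le ht]
          refine setIntegral_mono_set hint (ae_of_all _ fun u => ?_)
            Set.Ioc_subset_Ioi_self.eventuallyLE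
          simp only [hh]
          exact mul_nonneg hv₁ (by positivity)
    _ = v₁ / v₀ := heat_majorant_integral v₀ v₁ hv₀ hv₁
  · rw [intervalIntegral.integral_undef hfi, abs_zero]
    exact div_nonneg hv₁ hv₀.le
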